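/- Let G be a bounded Vilenkin group and (α_k) a sequence of positive integers with sup_k ρ(α_k) = κ < ∞. Then sup_k ‖D_{α_k}‖_{L¹(G)} ≤ c(κ + 1) < ∞ for a constant c depending only on sup m_k, and consequently the maximal operator S̃* f = sup_k |S_{α_k} f| is bounded from L^∞(G) to L^∞(G). -/

import Mathlib

open MeasureTheory Complex Real

def Mseq (m : ℕ → ℕ) : ℕ → ℕ
  | 0 => 1
  | k + 1 => m k * Mseq m k

def digit (m : ℕ → ℕ) (n j : ℕ) : ℕ := n / Mseq m j % m j

noncomputable def hi (m : ℕ → ℕ) (n : ℕ) : ℕ := sSup {j | digit m n j ≠ 0}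

noncomputable def lo (m : ℕ → ℕ) (n : ℕ) : ℕ := sInf {j | digit m n j ≠ 0}

noncomputable def rho (m : ℕ → ℕ) (n : ℕ) : ℕ := hi m n - lo m n

abbrev Gm (m : ℕ → ℕ) := ∀ k, ZMod (m k)

instance (n : ℕ) : MeasurableSpace (ZMod n) := ⊤

noncomputable def rad (m : ℕ → ℕ) (j : ℕ) (x : Gm m) : ℂ :=
  Complex.exp (2 * Real.pi * Complex.I * ((x j).val : ℂ) / (m j : ℂ))

noncomputable def vil (m : ℕ → ℕ) (n : ℕ) (x : Gm m) : ℂ :=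
  ∏ᶠ j, rad m j x ^ digit m n j

noncomputable def Dker (m : ℕ → ℕ) (n : ℕ) (x : Gm m) : ℂ :=
  ∑ k ∈ Finset.range n, vil m k x

/-- The defining property of the normalized Haar measure on the Vilenkin group:
every cylinder set `I_n(x)` has measure `1 / M_n`. -/
def IsVilenkinHaar (m : ℕ → ℕ) (μ : Measure (Gm m)) : Prop :=
  ∀ (n : ℕ) (x : Gm m), μ {y : Gm m | ∀ j < n, y j = x j} = (Mseq m n : ENNReal)⁻¹

noncomputable def vilCoeff (m : ℕ → ℕ) (μ : Measure (Gm m)) (f : Gm m → ℂ) (j : ℕ) : ℂ :=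
  ∫ t, f t * (starRingEnd ℂ) (vil m j t) ∂μ

noncomputable def Svil (m : ℕ → ℕ) (μ : Measure (Gm m)) (f : Gm m → ℂ) (n : ℕ) (x : Gm m) : ℂ :=
  ∑ j ∈ Finset.range n, vilCoeff m μ f j * vil m j x

variable {m : ℕ → ℕ}

lemma Mseq_pos (hm : ∀ k, 2 ≤ m k) (j : ℕ) : 0 < Mseq m j := by
  induction j with
  | zero => simp [Mseq]
  | succ k ih => have := hm k; simp only [Mseq]; positivity

lemma lt_Mseq (hm : ∀ k, 2 ≤ m k) (j : ℕ) : j < Mseq m j := by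
  induction j with
  | zero => simp [Mseq]
  | succ k ih =>
    have h2 := hm k
    have hpos := Mseq_pos hm k
    have : 2 * Mseq m k ≤ m k * Mseq m k := Nat.mul_le_mul_right _ h2
    simp only [Mseq]
    omega

lemma Mseq_dvd {i j : ℕ} (hij : i ≤ j) : Mseq m i ∣ Mseq m j := by
  induction j with
  | zero => simp_all
  | succ k ih =>
    rcases Nat.lt_or_ge i (k+1) with h | h
    · exact dvd_mul_of_dvd_right (ih (by omega)) _
    · have : i = k + 1 := by omega
      subst this; rfl

lemma Mseq_le (hm : ∀ k, 2 ≤ m k) {i j : ℕ} (hij : i ≤ j) : Mseq m i ≤ Mseq m j :=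
  Nat.le_of_dvd (Mseq_pos hm j) (Mseq_dvd hij)

lemma Mseq_succ_dvd {i j : ℕ} (hij : i < j) : m i * Mseq m i ∣ Mseq m j := by
  have : Mseq m (i+1) ∣ Mseq m j := Mseq_dvd hij
  simpa [Mseq, mul_comm] using this

lemma digit_lt (hm : ∀ k, 2 ≤ m k) (n j : ℕ) : digit m n j < m j :=
  Nat.mod_lt _ (by have := hm j; omega)

lemma digit_eq_zero_of_lt {n j : ℕ} (h : n < Mseq m j) : digit m n j = 0 := by
  simp [digit, Nat.div_eq_of_lt h]

lemma digit_eq_zero_of_le (hm : ∀ k, 2 ≤ m k) {n j : ℕ} (h : n ≤ j) : digit m n j = 0 :=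
  digit_eq_zero_of_lt (lt_of_le_of_lt h (lt_Mseq hm j))

lemma digit_add_low (hm : ∀ k, 2 ≤ m k) {q k i j : ℕ} (hij : i < j) :
    digit m (q * Mseq m j + k) i = digit m k i := by
  obtain ⟨c, hc⟩ := Mseq_dvd (m := m) (le_of_lt hij)
  have hmc : m i ∣ c := by
    obtain ⟨d, hd⟩ := Mseq_succ_dvd (m := m) hij
    have hpos := Mseq_pos hm i
    have h1 : Mseq m i * c = Mseq m i * (m i * d) := by rw [← hc, hd]; ring
    exact ⟨d, Nat.eq_of_mul_eq_mul_left hpos h1⟩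
  have hpos := Mseq_pos hm i
  obtain ⟨d, hd⟩ := hmc
  simp only [digit, hc]
  rw [show q * (Mseq m i * c) + k = (q * c) * Mseq m i + k by ring,
    Nat.add_comm, Nat.add_mul_div_right _ _ hpos, hd,
    show k / Mseq m i + q * (m i * d) = k / Mseq m i + (q * d) * m i by ring,
    Nat.add_mul_mod_self_right]

lemma digit_add_high (hm : ∀ k, 2 ≤ m k) {q k i j : ℕ} (hij : j ≤ i) (hk : k < Mseq m j) :
    digit m (q * Mseq m j + k) i = digit m (q * Mseq m j) i := by
  obtain ⟨c, hc⟩ := Mseq_dvd (m := m) hij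
  have hposj := Mseq_pos hm j
  simp only [digit, hc, ← Nat.div_div_eq_div_mul]
  rw [Nat.add_comm, Nat.add_mul_div_right _ _ hposj, Nat.div_eq_of_lt hk, Nat.zero_add,
    Nat.mul_div_cancel _ hposj]

lemma digit_mul_high_eq_zero (hm : ∀ k, 2 ≤ m k) {q i j : ℕ} (hij : i < j) :
    digit m (q * Mseq m j) i = 0 := by
  have := digit_add_low (m := m) hm (q := q) (k := 0) hij
  simpa [digit] using this

lemma digit_split (hm : ∀ k, 2 ≤ m k) {q k i j : ℕ} (hk : k < Mseq m j) :
    digit m (q * Mseq m j + k) i = digit m (q * Mseq m j) i + digit m k i := by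
  rcases Nat.lt_or_ge i j with h | h
  · rw [digit_add_low hm h, digit_mul_high_eq_zero hm h, Nat.zero_add]
  · rw [digit_add_high hm h hk,
      digit_eq_zero_of_lt (lt_of_lt_of_le hk (Mseq_le hm h)), Nat.add_zero]

lemma digit_single (hm : ∀ k, 2 ≤ m k) {t j : ℕ} (ht : t < m j) (i : ℕ) :
    digit m (t * Mseq m j) i = if i = j then t else 0 := by
  have hposj := Mseq_pos hm j
  rcases lt_trichotomy i j with h | h | h
  · simp [digit_mul_high_eq_zero hm h, Nat.ne_of_lt h]
  · subst h; simp [digit, Nat.mul_div_cancel _ hposj, Nat.mod_eq_of_lt ht]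
  · have : t * Mseq m j < Mseq m i := by
      calc t * Mseq m j < m j * Mseq m j := (Nat.mul_lt_mul_right hposj).2 ht
        _ ≤ Mseq m i := Nat.le_of_dvd (Mseq_pos hm i) (Mseq_succ_dvd h)
    simp [digit_eq_zero_of_lt this, Nat.ne_of_gt h]






lemma exp_congr {M : ℕ} (hM : M ≠ 0) {a b : ℤ} (h : a ≡ b [ZMOD M]) :
    Complex.exp (2 * π * I * (a : ℂ) / M) = Complex.exp (2 * π * I * (b : ℂ) / M) := by
  obtain ⟨k, hk⟩ : (M : ℤ) ∣ b - a := h.dvd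
  have hb : (b : ℂ) = a + M * k := by
    have : (b : ℤ) = a + M * k := by omega
    exact_mod_cast congrArg (Int.cast : ℤ → ℂ) this
  have hMc : (M : ℂ) ≠ 0 := Nat.cast_ne_zero.mpr hM
  rw [hb]
  rw [show 2 * π * I * ((a : ℂ) + M * k) / M = 2 * π * I * a / M + k * (2 * π * I) by
    field_simp]
  rw [Complex.exp_add, Complex.exp_int_mul_two_pi_mul_I, mul_one]

lemma val_cast_congr {M : ℕ} (a : ZMod M) [NeZero M] :
    ∀ b : ℤ, (b : ZMod M) = a → (a.val : ℤ) ≡ b [ZMOD M] := by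
  intro b hb
  rw [← ZMod.intCast_eq_intCast_iff]
  push_cast
  rw [ZMod.natCast_val, ZMod.cast_id, hb]

lemma rad_eq (m : ℕ → ℕ) (j : ℕ) (x : Gm m) :
    rad m j x = Complex.exp (2 * π * I * (((x j).val : ℤ) : ℂ) / (m j : ℂ)) := by
  simp [rad]

lemma rad_add (hm : ∀ k, 2 ≤ m k) (j : ℕ) (x y : Gm m) :
    rad m j (x + y) = rad m j x * rad m j y := by
  have : NeZero (m j) := ⟨by have := hm j; omega⟩
  have hMc : (m j : ℂ) ≠ 0 := Nat.cast_ne_zero.mpr (NeZero.ne _)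
  rw [rad_eq, rad_eq, rad_eq, ← Complex.exp_add]
  have hxy : ((x + y) j) = x j + y j := rfl
  have hcong : (((x j + y j).val : ℤ)) ≡ ((x j).val : ℤ) + ((y j).val : ℤ) [ZMOD m j] := by
    apply val_cast_congr
    push_cast
    rw [ZMod.natCast_val, ZMod.natCast_val, ZMod.cast_id, ZMod.cast_id]
  rw [hxy, exp_congr (NeZero.ne _) hcong]
  congr 1
  push_cast
  field_simp


lemma conj_exp_real_mul_I (r : ℝ) :
    (starRingEnd ℂ) (Complex.exp ((r : ℂ) * I)) = Complex.exp ((-r : ℂ) * I) := by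
  rw [← Complex.exp_conj]
  congr 1
  simp [Complex.conj_I]

lemma rad_form (hm : ∀ k, 2 ≤ m k) (j : ℕ) (x : Gm m) :
    rad m j x = Complex.exp (((2 * π * (x j).val / m j : ℝ) : ℂ) * I) := by
  rw [rad]
  congr 1
  have hMc : (m j : ℂ) ≠ 0 := Nat.cast_ne_zero.mpr (by have := hm j; omega)
  push_cast
  field_simp


lemma rad_neg (hm : ∀ k, 2 ≤ m k) (j : ℕ) (x : Gm m) :
    rad m j (-x) = (starRingEnd ℂ) (rad m j x) := by
  have : NeZero (m j) := ⟨by have := hm j; omega⟩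
  have hMc : (m j : ℂ) ≠ 0 := Nat.cast_ne_zero.mpr (NeZero.ne _)
  rw [rad_form hm j x, conj_exp_real_mul_I (2 * π * (x j).val / m j),
    rad_eq m j (-x)]
  have hneg : ((-x) j) = -(x j) := rfl
  rw [hneg]
  have hcong : ((((-(x j)).val : ℤ))) ≡ -(((x j).val : ℤ)) [ZMOD m j] := by
    apply val_cast_congr
    push_cast
    rw [ZMod.natCast_val, ZMod.cast_id]
  rw [exp_congr (NeZero.ne _) hcong]
  congr 1
  push_cast
  ring

lemma abs_rad (hm : ∀ k, 2 ≤ m k) (j : ℕ) (x : Gm m) : ‖rad m j x‖ = 1 := by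
  rw [rad_form hm]; exact Complex.norm_exp_ofReal_mul_I _

lemma rad_pow_card (hm : ∀ k, 2 ≤ m k) (j : ℕ) (x : Gm m) : rad m j x ^ (m j) = 1 := by
  have hMc : (m j : ℂ) ≠ 0 := Nat.cast_ne_zero.mpr (by have := hm j; omega)
  rw [rad, ← Complex.exp_nat_mul]
  rw [show (m j : ℂ) * (2 * π * I * ((x j).val : ℂ) / (m j : ℂ))
      = ((x j).val : ℂ) * (2 * π * I) by field_simp]
  exact_mod_cast Complex.exp_int_mul_two_pi_mul_I ((x j).val : ℤ)

lemma rad_ne_one (hm : ∀ k, 2 ≤ m k) (j : ℕ) (x : Gm m) (hx : x j ≠ 0) :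
    rad m j x ≠ 1 := by
  have hM : (m j) ≠ 0 := by have := hm j; omega
  have : NeZero (m j) := ⟨hM⟩
  have hprim : IsPrimitiveRoot (Complex.exp (2 * π * I / (m j : ℂ))) (m j) :=
    Complex.isPrimitiveRoot_exp _ hM
  have hMc : (m j : ℂ) ≠ 0 := Nat.cast_ne_zero.mpr hM
  have hradpow : rad m j x = Complex.exp (2 * π * I / (m j : ℂ)) ^ ((x j).val) := by
    rw [← Complex.exp_nat_mul, rad]
    congr 1
    field_simp

  rw [hradpow]
  intro h1
  have hdvd := (IsPrimitiveRoot.pow_eq_one_iff_dvd hprim _).1 h1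
  have hvlt : (x j).val < m j := ZMod.val_lt (x j)
  have hv0 : (x j).val ≠ 0 := by
    intro h0
    exact hx ((ZMod.val_eq_zero (x j)).mp h0)
  have := Nat.le_of_dvd (Nat.pos_of_ne_zero hv0) hdvd
  omega

lemma rad_geom_sum (hm : ∀ k, 2 ≤ m k) (j : ℕ) (x : Gm m) :
    ∑ t ∈ Finset.range (m j), rad m j x ^ t = if x j = 0 then (m j : ℂ) else 0 := by
  by_cases hx : x j = 0
  · have : rad m j x = 1 := by
      rw [rad, hx]; simp
    simp [this, hx]
  · rw [if_neg hx, geom_sum_eq (rad_ne_one hm j x hx), rad_pow_card hm, sub_self, zero_div]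

lemma vil_eq_prod (hm : ∀ k, 2 ≤ m k) {n N : ℕ} (hn : n ≤ N) (x : Gm m) :
    vil m n x = ∏ j ∈ Finset.range N, rad m j x ^ digit m n j := by
  apply finprod_eq_prod_of_mulSupport_subset
  intro j hj
  simp only [Function.mem_mulSupport] at hj
  have : digit m n j ≠ 0 := by
    intro h0; rw [h0] at hj; simp at hj
  have hjn : j < n := by
    by_contra h
    exact this (digit_eq_zero_of_le hm (by omega))
  simp only [Finset.coe_range, Set.mem_Iio]
  omega

lemma vil_zero (x : Gm m) : vil m 0 x = 1 := by
  have : ∀ j, digit m 0 j = 0 := fun j => by simp [digit]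
  simp [vil, this]

lemma abs_vil (hm : ∀ k, 2 ≤ m k) (n : ℕ) (x : Gm m) : ‖vil m n x‖ = 1 := by
  rw [vil_eq_prod hm (le_refl n), norm_prod]
  apply Finset.prod_eq_one
  intro j _
  rw [norm_pow, abs_rad hm, one_pow]

lemma vil_split (hm : ∀ k, 2 ≤ m k) {q k j : ℕ} (hk : k < Mseq m j) (x : Gm m) :
    vil m (q * Mseq m j + k) x = vil m (q * Mseq m j) x * vil m k x := by
  set N := q * Mseq m j + k + 1 with hN
  rw [vil_eq_prod hm (show q * Mseq m j + k ≤ N by omega) x,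
    vil_eq_prod hm (show q * Mseq m j ≤ N by omega) x,
    vil_eq_prod hm (show k ≤ N by omega) x, ← Finset.prod_mul_distrib]
  apply Finset.prod_congr rfl
  intro i _
  rw [digit_split hm hk, pow_add]

lemma vil_single (hm : ∀ k, 2 ≤ m k) {t j : ℕ} (ht : t < m j) (x : Gm m) :
    vil m (t * Mseq m j) x = rad m j x ^ t := by
  set N := t * Mseq m j + j + 1 with hN
  rw [vil_eq_prod hm (show t * Mseq m j ≤ N by omega) x]
  rw [Finset.prod_eq_single j]
  · rw [digit_single hm ht j, if_pos rfl]
  · intro i _ hij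
    rw [digit_single hm ht i, if_neg hij, pow_zero]
  · intro h
    exact absurd (Finset.mem_range.mpr (by omega)) h

lemma vil_add (hm : ∀ k, 2 ≤ m k) (n : ℕ) (x y : Gm m) :
    vil m n (x + y) = vil m n x * vil m n y := by
  rw [vil_eq_prod hm (le_refl n), vil_eq_prod hm (le_refl n),
    vil_eq_prod hm (le_refl n), ← Finset.prod_mul_distrib]
  apply Finset.prod_congr rfl
  intro i _
  rw [rad_add hm, mul_pow]

lemma vil_sub (hm : ∀ k, 2 ≤ m k) (n : ℕ) (t x : Gm m) :
    vil m n (t - x) = vil m n t * (starRingEnd ℂ) (vil m n x) := by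
  have h1 : vil m n (-x) = (starRingEnd ℂ) (vil m n x) := by
    rw [vil_eq_prod hm (le_refl n), vil_eq_prod hm (le_refl n), map_prod]
    apply Finset.prod_congr rfl
    intro i _
    rw [rad_neg hm, map_pow]
  rw [sub_eq_add_neg, vil_add hm, h1]

lemma Dker_split (hm : ∀ k, 2 ≤ m k) {q k j : ℕ} (hk : k ≤ Mseq m j) (x : Gm m) :
    Dker m (q * Mseq m j + k) x = Dker m (q * Mseq m j) x + vil m (q * Mseq m j) x * Dker m k x := by
  unfold Dker
  rw [Finset.sum_range_add, Finset.mul_sum]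
  congr 1
  apply Finset.sum_congr rfl
  intro s hs
  rw [vil_split hm (lt_of_lt_of_le (Finset.mem_range.mp hs) hk)]

lemma Dker_mul (hm : ∀ k, 2 ≤ m k) {q j : ℕ} (hq : q ≤ m j) (x : Gm m) :
    Dker m (q * Mseq m j) x = (∑ t ∈ Finset.range q, rad m j x ^ t) * Dker m (Mseq m j) x := by
  induction q with
  | zero => simp [Dker]
  | succ p ih =>
    have hp : p < m j := by omega
    rw [show (p + 1) * Mseq m j = p * Mseq m j + Mseq m j by ring,
      Dker_split hm (le_refl _) x, ih (by omega), vil_single hm hp,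
      Finset.sum_range_succ]
    ring

lemma Dker_Mseq (hm : ∀ k, 2 ≤ m k) (j : ℕ) (x : Gm m) :
    Dker m (Mseq m j) x = if ∀ i < j, x i = 0 then (Mseq m j : ℂ) else 0 := by
  induction j with
  | zero =>
    simp only [Mseq]
    rw [show (1 : ℕ) = 0 + 1 by rfl]
    unfold Dker
    rw [Finset.sum_range_succ]
    simp [vil_zero]
  | succ p ih =>
    have hM1 : Mseq m (p + 1) = (m p) * Mseq m p := rfl
    have hcond : (∀ i < p + 1, x i = 0) ↔ (x p = 0 ∧ ∀ i < p, x i = 0) := by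
      constructor
      · intro h; exact ⟨h p (by omega), fun i hi => h i (by omega)⟩
      · rintro ⟨h1, h2⟩ i hi
        rcases Nat.lt_succ_iff_lt_or_eq.mp hi with h | h
        · exact h2 i h
        · subst h; exact h1
    rw [hM1, Dker_mul hm (le_refl (m p)) x, ih, rad_geom_sum hm]; simp only [hcond]
    by_cases hx : x p = 0 <;> by_cases hall : ∀ i < p, x i = 0 <;>
      simp [hx, hall, hcond, Nat.cast_mul]

lemma abs_Dker_le (hm : ∀ k, 2 ≤ m k) (n : ℕ) (x : Gm m) :
    ‖Dker m n x‖ ≤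
      ∑ j ∈ Finset.range n, (digit m n j : ℝ) * ‖Dker m (Mseq m j) x‖ := by
  induction n using Nat.strong_induction_on with
  | _ n IH =>
  rcases Nat.eq_zero_or_pos n with hn | hn
  · subst hn; simp [Dker]
  set P : ℕ → Prop := fun j => Mseq m j ≤ n with hP
  have hP0 : P 0 := by simp only [hP, Mseq]; omega
  set j := Nat.findGreatest P n with hj
  have hPj : P j := Nat.findGreatest_spec (Nat.zero_le n) hP0
  have hMjn : Mseq m j ≤ n := hPj
  have hjn : j < n := lt_of_lt_of_le (lt_Mseq hm j) hMjn
  have hnMj1 : n < Mseq m (j + 1) := by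
    by_contra hc
    push_neg at hc
    have : j + 1 ≤ j := Nat.le_findGreatest (by omega) hc
    omega
  have hMpos := Mseq_pos hm j
  set q := n / Mseq m j with hq
  set k := n % Mseq m j with hk
  have hnqk : q * Mseq m j + k = n := by
    rw [hq, hk, mul_comm]; exact Nat.div_add_mod n _
  have hqlt : q < m j := by
    by_contra hc
    push_neg at hc
    have hle : Mseq m (j+1) ≤ q * Mseq m j := by
      have h1 : Mseq m (j+1) = m j * Mseq m j := rfl
      rw [h1]
      exact Nat.mul_le_mul_right _ hc
    have h2 : q * Mseq m j ≤ n := by omega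
    omega
  have hq1 : 1 ≤ q := (Nat.one_le_div_iff hMpos).mpr hMjn
  have hklt : k < Mseq m j := Nat.mod_lt n hMpos
  have hkn : k < n := by
    have h3 : Mseq m j ≤ q * Mseq m j := Nat.le_mul_of_pos_left _ hq1
    omega
  have hsplit : Dker m n x
      = Dker m (q * Mseq m j) x + vil m (q * Mseq m j) x * Dker m k x := by
    conv_lhs => rw [← hnqk]
    exact Dker_split hm (le_of_lt hklt) x
  have habsq : ‖Dker m (q * Mseq m j) x‖
      ≤ (q : ℝ) * ‖Dker m (Mseq m j) x‖ := by
    rw [Dker_mul hm (le_of_lt hqlt) x, norm_mul]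
    have hb : ‖∑ t ∈ Finset.range q, rad m j x ^ t‖ ≤ (q : ℝ) := by
      calc ‖∑ t ∈ Finset.range q, rad m j x ^ t‖
          ≤ ∑ t ∈ Finset.range q, ‖rad m j x ^ t‖ :=
            norm_sum_le _ _
        _ = (q : ℝ) := by
            rw [Finset.sum_congr rfl (fun t _ => by
              rw [norm_pow, abs_rad hm, one_pow])]
            simp
    exact mul_le_mul_of_nonneg_right hb (norm_nonneg _)
  have hdigj : digit m n j = q := by
    simp only [digit, ← hq]
    exact Nat.mod_eq_of_lt hqlt
  have hdig_ne : ∀ i, i ≠ j → digit m n i = digit m k i := by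
    intro i hij
    rcases lt_or_gt_of_ne hij with h | h
    · conv_lhs => rw [← hnqk]
      exact digit_add_low hm h
    · have h1 : digit m n i = 0 :=
        digit_eq_zero_of_lt (lt_of_lt_of_le hnMj1 (Mseq_le hm h))
      have h2 : digit m k i = 0 :=
        digit_eq_zero_of_lt (lt_of_lt_of_le hklt (Mseq_le hm (by omega)))
      rw [h1, h2]
  have hsum : ∑ i ∈ Finset.range n, (digit m n i : ℝ) * ‖Dker m (Mseq m i) x‖
      = (q : ℝ) * ‖Dker m (Mseq m j) x‖
        + ∑ i ∈ Finset.range k, (digit m k i : ℝ) * ‖Dker m (Mseq m i) x‖ := by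
    rw [← Finset.add_sum_erase _ _ (Finset.mem_range.mpr hjn)]
    congr 1
    · rw [hdigj]
    · have e1 : ∑ i ∈ (Finset.range n).erase j,
            (digit m n i : ℝ) * ‖Dker m (Mseq m i) x‖
          = ∑ i ∈ (Finset.range n).erase j,
            (digit m k i : ℝ) * ‖Dker m (Mseq m i) x‖ :=
        Finset.sum_congr rfl (fun i hi => by
          rw [hdig_ne i (Finset.ne_of_mem_erase hi)])
      have e2 : ∑ i ∈ (Finset.range n).erase j,
            (digit m k i : ℝ) * ‖Dker m (Mseq m i) x‖
          = ∑ i ∈ Finset.range n,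
            (digit m k i : ℝ) * ‖Dker m (Mseq m i) x‖ :=
        Finset.sum_erase _ (by rw [digit_eq_zero_of_lt hklt]; simp)
      have e3 : ∑ i ∈ Finset.range n,
            (digit m k i : ℝ) * ‖Dker m (Mseq m i) x‖
          = ∑ i ∈ Finset.range k,
            (digit m k i : ℝ) * ‖Dker m (Mseq m i) x‖ :=
        (Finset.sum_subset (Finset.range_subset_range.mpr (le_of_lt hkn)) (fun i hi hik => by
          have : k ≤ i := by
            simp only [Finset.mem_range, not_lt] at hik
            exact hik
          rw [digit_eq_zero_of_le hm this]
          simp)).symm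
      rw [e1, e2, e3]
  rw [hsum]
  calc ‖Dker m n x‖
      ≤ ‖Dker m (q * Mseq m j) x‖
        + ‖vil m (q * Mseq m j) x‖ * ‖Dker m k x‖ := by
        rw [hsplit, ← norm_mul]
        exact norm_add_le _ _
    _ = ‖Dker m (q * Mseq m j) x‖ + ‖Dker m k x‖ := by
        rw [abs_vil hm, one_mul]
    _ ≤ (q : ℝ) * ‖Dker m (Mseq m j) x‖
        + ∑ i ∈ Finset.range k, (digit m k i : ℝ) * ‖Dker m (Mseq m i) x‖ :=
        add_le_add habsq (IH k hkn)




lemma exists_digit_ne_zero (hm : ∀ k, 2 ≤ m k) {n : ℕ} (hn : 0 < n) :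
    ∃ j, digit m n j ≠ 0 := by
  set P : ℕ → Prop := fun j => Mseq m j ≤ n with hP
  have hP0 : P 0 := by simp only [hP, Mseq]; omega
  set j := Nat.findGreatest P n with hj
  have hPj : P j := Nat.findGreatest_spec (Nat.zero_le n) hP0
  have hMjn : Mseq m j ≤ n := hPj
  have hjn : j < n := lt_of_lt_of_le (lt_Mseq hm j) hMjn
  have hnMj1 : n < Mseq m (j + 1) := by
    by_contra hc
    push_neg at hc
    have : j + 1 ≤ j := Nat.le_findGreatest (by omega) hc
    omega
  have hMpos := Mseq_pos hm j
  refine ⟨j, ?_⟩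
  have hq1 : 1 ≤ n / Mseq m j := (Nat.one_le_div_iff hMpos).mpr hMjn
  have hqlt : n / Mseq m j < m j := by
    by_contra hc
    push_neg at hc
    have hle : Mseq m (j+1) ≤ (n / Mseq m j) * Mseq m j := by
      have h1 : Mseq m (j+1) = m j * Mseq m j := rfl
      rw [h1]
      exact Nat.mul_le_mul_right _ hc
    have h2 : (n / Mseq m j) * Mseq m j ≤ n := by
      rw [mul_comm]
      exact Nat.mul_div_le n _
    omega
  simp only [digit]
  rw [Nat.mod_eq_of_lt hqlt]
  omega

lemma digit_sum_le (hm : ∀ k, 2 ≤ m k) {mstar : ℕ} (hms : ∀ k, m k ≤ mstar)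
    {n κ : ℕ} (hn : 0 < n) (hrho : rho m n ≤ κ) :
    ∑ j ∈ Finset.range n, digit m n j ≤ mstar * (κ + 1) := by
  set S : Set ℕ := {j | digit m n j ≠ 0} with hS
  have hSne : S.Nonempty := exists_digit_ne_zero hm hn
  have hSbdd : BddAbove S := by
    refine ⟨n, fun j hj => ?_⟩
    by_contra hc
    exact hj (digit_eq_zero_of_le hm (by omega))
  have hmem_Icc : ∀ j, digit m n j ≠ 0 → j ∈ Finset.Icc (lo m n) (hi m n) := by
    intro j hj
    rw [Finset.mem_Icc]
    exact ⟨Nat.sInf_le hj, le_csSup hSbdd hj⟩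
  calc ∑ j ∈ Finset.range n, digit m n j
      = ∑ j ∈ (Finset.range n).filter (fun j => digit m n j ≠ 0), digit m n j := by
        rw [Finset.sum_filter_ne_zero]
    _ ≤ ((Finset.range n).filter (fun j => digit m n j ≠ 0)).card * mstar := by
        apply Finset.sum_le_card_nsmul
        intro j _
        exact le_trans (le_of_lt (digit_lt hm n j)) (hms j)
    _ ≤ (κ + 1) * mstar := by
        apply Nat.mul_le_mul_right
        calc ((Finset.range n).filter (fun j => digit m n j ≠ 0)).card
            ≤ (Finset.Icc (lo m n) (hi m n)).card := by
              apply Finset.card_le_card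
              intro j hj
              simp only [Finset.mem_filter] at hj
              exact hmem_Icc j hj.2
          _ = hi m n + 1 - lo m n := Nat.card_Icc _ _
          _ ≤ κ + 1 := by
              have h1 : hi m n - lo m n ≤ κ := hrho
              omega
    _ = mstar * (κ + 1) := Nat.mul_comm _ _

lemma measurable_rad (j : ℕ) : Measurable (rad m j) := by
  have h1 : Measurable fun x : Gm m => x j := measurable_pi_apply j
  have h2 : Measurable fun a : ZMod (m j) =>
      Complex.exp (2 * π * I * (a.val : ℂ) / (m j : ℂ)) := measurable_from_top
  exact h2.comp h1

lemma measurable_vil (hm : ∀ k, 2 ≤ m k) (n : ℕ) : Measurable (vil m n) := by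
  have : vil m n = fun x => ∏ j ∈ Finset.range n, rad m j x ^ digit m n j := by
    funext x
    exact vil_eq_prod hm (le_refl n) x
  rw [this]
  exact Finset.measurable_prod _ (fun j _ => (measurable_rad j).pow_const _)

lemma measurable_Dker (hm : ∀ k, 2 ≤ m k) (n : ℕ) : Measurable (Dker m n) :=
  Finset.measurable_sum _ (fun k _ => measurable_vil hm k)

lemma measurable_subConstGm (x : Gm m) : Measurable (fun t : Gm m => t - x) := by
  apply measurable_pi_lambda
  intro i
  have h1 : Measurable fun t : Gm m => t i := measurable_pi_apply i
  have h2 : Measurable fun a : ZMod (m i) => a - x i := measurable_from_top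
  exact h2.comp h1

lemma measurableSet_cyl (j : ℕ) (x : Gm m) :
    MeasurableSet {y : Gm m | ∀ i < j, y i = x i} := by
  have : {y : Gm m | ∀ i < j, y i = x i}
      = ⋂ i ∈ Set.Iio j, (fun y : Gm m => y i) ⁻¹' {x i} := by
    ext y
    simp [Set.mem_iInter]
  rw [this]
  exact MeasurableSet.biInter (Set.to_countable _)
    (fun i _ => (measurable_pi_apply i) (MeasurableSet.singleton (x i)))


lemma abs_Dker_le_nat (hm : ∀ k, 2 ≤ m k) (n : ℕ) (y : Gm m) :
    ‖Dker m n y‖ ≤ (n : ℝ) := by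
  calc ‖Dker m n y‖ ≤ ∑ k ∈ Finset.range n, ‖vil m k y‖ :=
        norm_sum_le _ _
    _ = (n : ℝ) := by
        rw [Finset.sum_congr rfl (fun k _ => abs_vil hm k y)]
        simp

lemma integral_abs_Dker_le (hm : ∀ k, 2 ≤ m k) {mstar : ℕ} (hms : ∀ k, m k ≤ mstar)
    (μ : Measure (Gm m)) [IsProbabilityMeasure μ] (hHaar : IsVilenkinHaar m μ)
    {n κ : ℕ} (hn : 0 < n) (hrho : rho m n ≤ κ) (x : Gm m) :
    ∫ t, ‖Dker m n (t - x)‖ ∂μ ≤ ((mstar * (κ + 1) : ℕ) : ℝ) := by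
  set g : Gm m → ℝ := fun t => ∑ j ∈ Finset.range n, (digit m n j : ℝ) *
    Set.indicator {y : Gm m | ∀ i < j, y i = x i} (fun _ => (Mseq m j : ℝ)) t with hg
  have h_pt : ∀ t, ‖Dker m n (t - x)‖ ≤ g t := by
    intro t
    refine le_trans (abs_Dker_le hm n (t - x)) ?_
    apply Finset.sum_le_sum
    intro j _
    have heq : ‖Dker m (Mseq m j) (t - x)‖
        = Set.indicator {y : Gm m | ∀ i < j, y i = x i} (fun _ => (Mseq m j : ℝ)) t := by
      rw [Dker_Mseq hm]
      by_cases hc : ∀ i < j, t i = x i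
      · have hc' : ∀ i < j, (t - x) i = 0 := fun i hi => by
          show t i - x i = 0
          rw [hc i hi, sub_self]
        rw [if_pos hc', Set.indicator_of_mem (show t ∈ {y : Gm m | ∀ i < j, y i = x i} from hc)]
        simp
      · have hc' : ¬ ∀ i < j, (t - x) i = 0 := by
          intro hall
          exact hc fun i hi => sub_eq_zero.mp (hall i hi)
        rw [if_neg hc', Set.indicator_of_notMem (show t ∉ {y : Gm m | ∀ i < j, y i = x i} from hc)]
        simp
    rw [heq]
  have hmeasD : Measurable fun t : Gm m => ‖Dker m n (t - x)‖ :=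
    continuous_norm.measurable.comp ((measurable_Dker hm n).comp (measurable_subConstGm x))
  have hint1 : Integrable (fun t => ‖Dker m n (t - x)‖) μ := by
    apply Integrable.mono' (integrable_const (n : ℝ)) hmeasD.aestronglyMeasurable
    filter_upwards with t
    rw [Real.norm_eq_abs, _root_.abs_of_nonneg (norm_nonneg _)]
    exact abs_Dker_le_nat hm n (t - x)
  have hint_term : ∀ j, Integrable (fun t => (digit m n j : ℝ) *
      Set.indicator {y : Gm m | ∀ i < j, y i = x i} (fun _ => (Mseq m j : ℝ)) t) μ :=
    fun j => (((integrable_const ((Mseq m j : ℝ))).indicator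
      (measurableSet_cyl j x))).const_mul _
  have hint2 : Integrable g μ := integrable_finset_sum _ (fun j _ => hint_term j)
  calc ∫ t, ‖Dker m n (t - x)‖ ∂μ ≤ ∫ t, g t ∂μ :=
        integral_mono hint1 hint2 h_pt
    _ = ∑ j ∈ Finset.range n, (digit m n j : ℝ) := by
        rw [hg, integral_finset_sum _ (fun j _ => hint_term j)]
        apply Finset.sum_congr rfl
        intro j _
        rw [MeasureTheory.integral_const_mul, integral_indicator_const _ (measurableSet_cyl j x),
          measureReal_def, hHaar j x]
        have hMne : (Mseq m j : ℝ) ≠ 0 := by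
          have := Mseq_pos hm j
          positivity
        rw [ENNReal.toReal_inv, smul_eq_mul]
        simp only [ENNReal.toReal_natCast]
        rw [inv_mul_cancel₀ hMne, mul_one]
    _ ≤ ((mstar * (κ + 1) : ℕ) : ℝ) := by
        have := digit_sum_le hm hms hn hrho
        calc ∑ j ∈ Finset.range n, (digit m n j : ℝ)
            = ((∑ j ∈ Finset.range n, digit m n j : ℕ) : ℝ) := by push_cast; ring
          _ ≤ _ := Nat.cast_le.mpr this



lemma Svil_eq (hm : ∀ k, 2 ≤ m k) (μ : Measure (Gm m)) [IsProbabilityMeasure μ]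
    {f : Gm m → ℂ} {B : ℝ} (hf : Measurable f) (hB : ∀ x, ‖f x‖ ≤ B)
    (n : ℕ) (x : Gm m) :
    Svil m μ f n x = ∫ t, f t * (starRingEnd ℂ) (Dker m n (t - x)) ∂μ := by
  have hj : ∀ j, Integrable (fun t => f t * (starRingEnd ℂ) (vil m j t) * vil m j x) μ := by
    intro j
    have hmeas : Measurable fun t => f t * (starRingEnd ℂ) (vil m j t) * vil m j x :=
      (hf.mul (Complex.continuous_conj.measurable.comp (measurable_vil hm j))).mul_const _
    apply Integrable.mono' (integrable_const B) hmeas.aestronglyMeasurable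
    filter_upwards with t
    rw [norm_mul, norm_mul, Complex.norm_conj, abs_vil hm, abs_vil hm,
      mul_one, mul_one]
    exact hB t
  have h1 : ∀ j, vilCoeff m μ f j * vil m j x
      = ∫ t, f t * (starRingEnd ℂ) (vil m j t) * vil m j x ∂μ :=
    fun j => (integral_mul_const _ _).symm
  rw [Svil, Finset.sum_congr rfl (fun j _ => h1 j),
    ← integral_finset_sum _ (fun j _ => hj j)]
  congr 1
  funext t
  unfold Dker
  rw [map_sum, Finset.mul_sum]
  apply Finset.sum_congr rfl
  intro j _
  rw [vil_sub hm j t x, map_mul, Complex.conj_conj]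
  ring

lemma abs_Svil_le (hm : ∀ k, 2 ≤ m k) {mstar : ℕ} (hms : ∀ k, m k ≤ mstar)
    (μ : Measure (Gm m)) [IsProbabilityMeasure μ] (hHaar : IsVilenkinHaar m μ)
    {f : Gm m → ℂ} {B : ℝ} (hf : Measurable f) (hB : ∀ x, ‖f x‖ ≤ B)
    {n κ : ℕ} (hn : 0 < n) (hrho : rho m n ≤ κ) (x : Gm m) :
    ‖Svil m μ f n x‖ ≤ ((mstar * (κ + 1) : ℕ) : ℝ) * B := by
  have hB0 : 0 ≤ B := le_trans (norm_nonneg (f x)) (hB x)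
  have hmeasD : Measurable fun t : Gm m => Dker m n (t - x) :=
    (measurable_Dker hm n).comp (measurable_subConstGm x)
  have hintD : Integrable (fun t => ‖Dker m n (t - x)‖) μ := by
    apply Integrable.mono' (integrable_const (n : ℝ))
      (continuous_norm.measurable.comp hmeasD).aestronglyMeasurable
    filter_upwards with t
    simp only [Function.comp_apply]
    rw [Real.norm_eq_abs, _root_.abs_of_nonneg (norm_nonneg _)]
    exact abs_Dker_le_nat hm n (t - x)
  have hint_prod : Integrable (fun t => f t * (starRingEnd ℂ) (Dker m n (t - x))) μ := by
    have hmeas : Measurable fun t => f t * (starRingEnd ℂ) (Dker m n (t - x)) :=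
      hf.mul (Complex.continuous_conj.measurable.comp hmeasD)
    apply Integrable.mono' (integrable_const (B * n)) hmeas.aestronglyMeasurable
    filter_upwards with t
    rw [norm_mul, Complex.norm_conj]
    exact mul_le_mul (hB t) (abs_Dker_le_nat hm n (t - x)) (norm_nonneg _) hB0
  rw [Svil_eq hm μ hf hB n x]
  calc ‖∫ t, f t * (starRingEnd ℂ) (Dker m n (t - x)) ∂μ‖
      ≤ ∫ t, ‖f t * (starRingEnd ℂ) (Dker m n (t - x))‖ ∂μ := by
        have h := norm_integral_le_integral_norm (fun t => f t * (starRingEnd ℂ) (Dker m n (t - x))) (μ := μ)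
        exact h
    _ ≤ ∫ t, B * ‖Dker m n (t - x)‖ ∂μ := by
        have hleft : Integrable
            (fun t => ‖f t * (starRingEnd ℂ) (Dker m n (t - x))‖) μ := by
          have h2 := hint_prod.norm
          exact h2
        apply integral_mono hleft (hintD.const_mul B)
        intro t
        simp only
        rw [norm_mul, Complex.norm_conj]
        exact mul_le_mul_of_nonneg_right (hB t) (norm_nonneg _)
    _ = B * ∫ t, ‖Dker m n (t - x)‖ ∂μ := MeasureTheory.integral_const_mul B _
    _ ≤ B * ((mstar * (κ + 1) : ℕ) : ℝ) := by
        apply mul_le_mul_of_nonneg_left (integral_abs_Dker_le hm hms μ hHaar hn hrho x) hB0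
    _ = ((mstar * (κ + 1) : ℕ) : ℝ) * B := mul_comm _ _

/-- If `sup_k ρ(α_k) = κ < ∞`, then `‖D_{α_k}‖₁ ≤ c (κ + 1)` uniformly in `k`,
and consequently the restricted maximal operator `f ↦ sup_k |S_{α_k} f|` is
bounded from `L^∞` to `L^∞`. -/
theorem stmt_13 (mstar κ : ℕ) :
    ∃ c : ℝ, 0 < c ∧
      ∀ (m : ℕ → ℕ), (∀ k, 2 ≤ m k) → (∀ k, m k ≤ mstar) →
        ∀ (μ : Measure (Gm m)), IsProbabilityMeasure μ → IsVilenkinHaar m μ →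
          ∀ (α : ℕ → ℕ), (∀ k, 1 ≤ α k) → (∀ k, rho m (α k) ≤ κ) →
            (∀ k, ∫ x, ‖Dker m (α k) x‖ ∂μ ≤ c * (κ + 1)) ∧
            ∀ (f : Gm m → ℂ) (B : ℝ), Measurable f → (∀ x, ‖f x‖ ≤ B) →
              ∀ (k : ℕ) (x : Gm m),
                ‖Svil m μ f (α k) x‖ ≤ c * (κ + 1) * B := by
  refine ⟨(mstar : ℝ) + 1, by positivity, ?_⟩
  intro m hm hms μ hprob hHaar α hα hρ
  haveI := hprob
  have hcast : ((mstar * (κ + 1) : ℕ) : ℝ) ≤ ((mstar : ℝ) + 1) * ((κ : ℝ) + 1) := by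
    push_cast
    have h1 : (mstar : ℝ) ≤ (mstar : ℝ) + 1 := by linarith
    have h2 : (0:ℝ) ≤ (κ : ℝ) + 1 := by positivity
    nlinarith
  constructor
  · intro k
    have h := integral_abs_Dker_le hm hms μ hHaar (by have := hα k; omega) (hρ k) (0 : Gm m)
    have he : (fun t : Gm m => ‖Dker m (α k) (t - 0)‖)
        = fun t => ‖Dker m (α k) t‖ := by
      funext t
      rw [sub_zero]
    rw [he] at h
    exact le_trans h hcast
  · intro f B hf hB k x
    have hB0 : 0 ≤ B := le_trans (norm_nonneg (f x)) (hB x)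
    have h := abs_Svil_le hm hms μ hHaar hf hB (by have := hα k; omega) (hρ k) x
    exact le_trans h (mul_le_mul_of_nonneg_right hcast hB0)
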